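/- Let p be a prime with p > n ≥ 2. The number of vectors v in (Z/pZ)^n with v_i ≠ v_j for all i < j and v_i - v_j ∉ {0, 1} for all 1 ≤ i < j ≤ n equals p·(p-n)^{n-1}. -/

import Mathlib

namespace ShiAux
variable {n p : ℕ}

theorem cast_inj_of_lt (hp0 : 0 < p) {a b : ℕ} (ha : a < p) (hb : b < p)
    (h : (a : ZMod p) = b) : a = b := by
  haveI : NeZero p := ⟨hp0.ne'⟩
  rw [← ZMod.val_cast_of_lt ha, ← ZMod.val_cast_of_lt hb, h]
def klt (f : Fin n → Fin (p - n)) (j i : Fin n) : Prop :=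
  f j < f i ∨ (f j = f i ∧ j < i)

instance (f : Fin n → Fin (p - n)) (i : Fin n) : DecidablePred (fun j => klt f j i) :=
  fun j => by unfold klt; infer_instance

theorem klt_irrefl (f : Fin n → Fin (p - n)) (i : Fin n) : ¬ klt f i i := by
  simp [klt]

theorem klt_trans {f : Fin n → Fin (p - n)} {i j k : Fin n} (h1 : klt f i j) (h2 : klt f j k) :
    klt f i k := by
  rcases h1 with h1 | ⟨h1, h1'⟩ <;> rcases h2 with h2 | ⟨h2, h2'⟩
  · exact Or.inl (h1.trans h2)
  · exact Or.inl (h2 ▸ h1)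
  · exact Or.inl (lt_of_le_of_lt (le_of_eq h1) h2)
  · exact Or.inr ⟨h1.trans h2, h1'.trans h2'⟩

theorem klt_total {f : Fin n → Fin (p - n)} {i j : Fin n} (h : i ≠ j) :
    klt f i j ∨ klt f j i := by
  rcases lt_trichotomy (f i) (f j) with h1 | h1 | h1
  · exact Or.inl (Or.inl h1)
  · rcases lt_or_gt_of_ne h with h2 | h2
    · exact Or.inl (Or.inr ⟨h1, h2⟩)
    · exact Or.inr (Or.inr ⟨h1.symm, h2⟩)
  · exact Or.inr (Or.inl h1)

def rk (f : Fin n → Fin (p - n)) (i : Fin n) : ℕ :=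
  (Finset.univ.filter (fun j => klt f j i)).card

def posf (f : Fin n → Fin (p - n)) (i : Fin n) : ℕ := (f i : ℕ) + rk f i

theorem rk_lt_rk {f : Fin n → Fin (p - n)} {i k : Fin n} (h : klt f i k) :
    rk f i < rk f k := by
  apply Finset.card_lt_card
  constructor
  · intro j hj
    simp only [Finset.mem_filter, Finset.mem_univ, true_and] at hj ⊢
    exact klt_trans hj h
  · intro hsub
    have := hsub (by simp [h] : i ∈ Finset.univ.filter (fun j => klt f j k))
    simp only [Finset.mem_filter] at this
    exact klt_irrefl f i this.2

theorem posf_lt_posf {f : Fin n → Fin (p - n)} {i k : Fin n} (h : klt f i k) :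
    posf f i < posf f k := by
  have h1 : (f i : ℕ) ≤ (f k : ℕ) := by
    rcases h with h | ⟨h, _⟩
    · exact le_of_lt h
    · exact le_of_eq (by rw [h])
  have h2 := rk_lt_rk h
  unfold posf; omega

theorem klt_iff_posf {f : Fin n → Fin (p - n)} {i j : Fin n} :
    klt f j i ↔ posf f j < posf f i := by
  constructor
  · exact posf_lt_posf
  · intro h
    by_cases hij : j = i
    · subst hij; omega
    · rcases klt_total hij with h1 | h1
      · exact h1
      · exact absurd (posf_lt_posf h1) (by omega)

theorem rk_lt_n {f : Fin n → Fin (p - n)} (i : Fin n) : rk f i < n := by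
  have : Finset.univ.filter (fun j => klt f j i) ⊆ Finset.univ.erase i := by
    intro j hj
    simp only [Finset.mem_filter, Finset.mem_univ, true_and] at hj
    apply Finset.mem_erase.2
    refine ⟨fun hji => ?_, Finset.mem_univ j⟩
    exact klt_irrefl f i (hji ▸ hj)
  have h2 := Finset.card_le_card this
  have h3 : (Finset.univ.erase i).card = n - 1 := by
    rw [Finset.card_erase_of_mem (Finset.mem_univ i), Finset.card_univ, Fintype.card_fin]
  have := i.pos
  unfold rk; omega

theorem posf_add_one_lt (hnp : n < p) {f : Fin n → Fin (p - n)} (i : Fin n) :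
    posf f i + 1 < p := by
  have h1 : (f i : ℕ) < p - n := (f i).2
  have h2 := rk_lt_n (f := f) i
  have := i.pos
  unfold posf; omega

def fwd (e : ZMod p) (f : Fin n → Fin (p - n)) : Fin n → ZMod p :=
  fun i => e + ((posf f i + 1 : ℕ) : ZMod p)

theorem posf_ne_succ (hnp : n < p) {f : Fin n → Fin (p - n)} {i j : Fin n} (hij : i < j) :
    posf f i ≠ posf f j + 1 := by
  intro h
  have h1 : ¬ klt f i j := by
    intro hk
    have := posf_lt_posf hk
    omega
  have h2 : klt f j i := (klt_total (show j ≠ i from fun he => absurd he.symm hij.ne)).resolve_right h1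
  rcases h2 with h2 | ⟨h2, h2'⟩
  · have h3 := rk_lt_rk (Or.inl h2 : klt f j i)
    have h4 : (f j : ℕ) + 1 ≤ (f i : ℕ) := h2
    unfold posf at h; omega
  · exact absurd h2' (by omega)

theorem fwd_sub (e : ZMod p) (f : Fin n → Fin (p - n)) (i j : Fin n) :
    fwd e f i - fwd e f j = ((posf f i + 1 : ℕ) : ZMod p) - ((posf f j + 1 : ℕ) : ZMod p) := by
  unfold fwd; ring

theorem fwd_valid (hnp : n < p) (e : ZMod p) (f : Fin n → Fin (p - n)) :
    (∀ i j : Fin n, i < j → fwd e f i ≠ fwd e f j) ∧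
    (∀ i j : Fin n, i < j → fwd e f i - fwd e f j ≠ 0 ∧ fwd e f i - fwd e f j ≠ 1) := by
  have hp0 : 0 < p := lt_of_le_of_lt (Nat.zero_le n) hnp
  have hne : ∀ i j : Fin n, i < j → fwd e f i - fwd e f j ≠ 0 := by
    intro i j hij h
    rw [fwd_sub, sub_eq_zero] at h
    have := cast_inj_of_lt hp0 (posf_add_one_lt hnp i) (posf_add_one_lt hnp j) h
    have h2 : posf f i = posf f j := by omega
    have : ¬ klt f i j := fun hk => by have := posf_lt_posf hk; omega
    have h3 : klt f j i := (klt_total (show j ≠ i from fun he => absurd he.symm hij.ne)).resolve_right this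
    have := posf_lt_posf h3
    omega
  refine ⟨fun i j hij h => hne i j hij (by rw [h, sub_self]), fun i j hij => ⟨hne i j hij, ?_⟩⟩
  intro h
  rw [fwd_sub, sub_eq_iff_eq_add] at h
  have h2 : ((posf f i + 1 : ℕ) : ZMod p) = ((posf f j + 2 : ℕ) : ZMod p) := by
    rw [h]; push_cast; ring
  have hi := posf_add_one_lt hnp (f := f) i
  have hj := posf_add_one_lt hnp (f := f) j
  by_cases hc : posf f j + 2 < p
  · have := cast_inj_of_lt hp0 hi hc h2
    exact posf_ne_succ (f := f) hnp hij (by omega)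
  · -- posf f j + 2 = p
    have hc2 : posf f j + 2 = p := by omega
    have h3 : ((posf f j + 2 : ℕ) : ZMod p) = 0 := by
      rw [hc2]; exact_mod_cast ZMod.natCast_self p
    rw [h3] at h2
    have : (posf f i + 1 : ℕ) = 0 := cast_inj_of_lt hp0 hi hp0 (by rw [h2]; push_cast; simp)
    omega

theorem fwd_ne (hnp : n < p) (e : ZMod p) (f : Fin n → Fin (p - n)) (i : Fin n) :
    fwd e f i ≠ e := by
  have hp0 : 0 < p := lt_of_le_of_lt (Nat.zero_le n) hnp
  intro h
  have h2 : ((posf f i + 1 : ℕ) : ZMod p) = ((0 : ℕ) : ZMod p) := by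
    have := sub_eq_zero.2 h
    unfold fwd at this
    push_cast at this ⊢
    linear_combination this
  have := cast_inj_of_lt hp0 (posf_add_one_lt hnp i) hp0 h2
  omega

theorem fwd_inj (hnp : n < p) {e e' : ZMod p} {f f' : Fin n → Fin (p - n)}
    (he : e = e') (h : fwd e f = fwd e' f') : f = f' := by
  subst he
  have hp0 : 0 < p := lt_of_le_of_lt (Nat.zero_le n) hnp
  have hpos : ∀ i, posf f i = posf f' i := by
    intro i
    have h1 : ((posf f i + 1 : ℕ) : ZMod p) = ((posf f' i + 1 : ℕ) : ZMod p) := by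
      have := congrFun h i
      unfold fwd at this
      exact add_left_cancel this
    have := cast_inj_of_lt hp0 (posf_add_one_lt hnp i) (posf_add_one_lt hnp i) h1
    omega
  have hrk : ∀ i, rk f i = rk f' i := by
    intro i
    unfold rk
    congr 1
    apply Finset.filter_congr
    intro j _
    simp only [klt_iff_posf, hpos]
  funext i
  have h1 := hpos i
  unfold posf at h1
  rw [hrk i] at h1
  exact Fin.ext (by omega)

open Finset

theorem count_le {g : Fin n → ℕ} (hg : Function.Injective g) (a b : ℕ) :
    (univ.filter (fun k => a ≤ g k ∧ g k < b)).card ≤ b - a := by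
  have h := Finset.card_le_card_of_injOn (s := univ.filter (fun k => a ≤ g k ∧ g k < b))
    (f := fun k => g k - a) (t := Finset.range (b - a)) ?_ ?_
  · simpa using h
  · intro k hk
    simp only [Finset.mem_coe, Finset.coe_filter, Set.mem_setOf_eq, mem_filter, mem_univ, true_and] at hk
    simp only [Finset.mem_coe, Finset.mem_range]
    omega
  · intro k hk k' hk' hkk
    simp only [coe_filter, Set.mem_setOf_eq, mem_univ, true_and] at hk hk'
    dsimp only at hkk
    exact hg (by omega)

theorem all_attained {g : Fin n → ℕ} (hg : Function.Injective g) (a b : ℕ)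
    (hcard : (univ.filter (fun k => a ≤ g k ∧ g k < b)).card = b - a)
    {c : ℕ} (hc1 : a ≤ c) (hc2 : c < b) : ∃ k, g k = c := by
  set s := univ.filter (fun k => a ≤ g k ∧ g k < b) with hs
  have hinj : Set.InjOn (fun k => g k - a) s := by
    intro k hk k' hk' hkk
    simp only [hs, coe_filter, Set.mem_setOf_eq, mem_univ, true_and] at hk hk'
    dsimp only at hkk
    exact hg (by omega)
  have hsub : s.image (fun k => g k - a) ⊆ Finset.range (b - a) := by
    intro x hx
    simp only [Finset.mem_image, hs, mem_filter] at hx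
    obtain ⟨k, ⟨_, hk⟩, rfl⟩ := hx
    simp only [Finset.mem_range]; omega
  have hcard2 : (s.image (fun k => g k - a)).card = b - a := by
    rw [Finset.card_image_of_injOn hinj, hcard]
  have heq : s.image (fun k => g k - a) = Finset.range (b - a) :=
    Finset.eq_of_subset_of_card_le hsub (by rw [hcard2, Finset.card_range])
  have : c - a ∈ Finset.range (b - a) := by simp only [Finset.mem_range]; omega
  rw [← heq] at this
  simp only [Finset.mem_image, hs, mem_filter] at this
  obtain ⟨k, ⟨_, hk1, hk2⟩, hk3⟩ := this
  exact ⟨k, by omega⟩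

theorem chain {g : Fin n → ℕ} (adj : ∀ a b : Fin n, g a + 1 = g b → a < b) :
    ∀ (d : ℕ) (a b : Fin n), g a + d + 1 = g b →
      (∀ c, g a ≤ c → c < g b → ∃ k, g k = c) → a < b := by
  intro d
  induction d with
  | zero => intro a b h _; exact adj a b (by omega)
  | succ d ih =>
    intro a b h hrun
    obtain ⟨k, hk⟩ := hrun (g a + d + 1) (by omega) (by omega)
    have h1 : a < k := ih a k (by omega) (fun c hc hc2 => hrun c hc (by omega))
    have h2 : k < b := adj k b (by omega)
    exact h1.trans h2

def rnk (g : Fin n → ℕ) (i : Fin n) : ℕ := (univ.filter (fun j => g j < g i)).card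

theorem rnk_le {g : Fin n → ℕ} (hg : Function.Injective g) (i : Fin n) :
    rnk g i ≤ g i := by
  have h : univ.filter (fun j => g j < g i) = univ.filter (fun k => 0 ≤ g k ∧ g k < g i) := by
    apply Finset.filter_congr; intro j _; simp
  have := count_le hg 0 (g i)
  rw [← h] at this
  unfold rnk; omega

theorem rnk_card_split {g : Fin n → ℕ} (hg : Function.Injective g) (i : Fin n) :
    rnk g i + (univ.filter (fun j => g i < g j)).card + 1 = n := by
  have h1 := Finset.card_filter_add_card_filter_not (s := (univ : Finset (Fin n)))
    (p := fun k => g k < g i)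
  have h2 : univ.filter (fun k => ¬ g k < g i) = insert i (univ.filter (fun j => g i < g j)) := by
    ext k
    simp only [mem_filter, mem_univ, true_and, Finset.mem_insert]
    constructor
    · intro hk
      rcases Nat.lt_or_ge (g i) (g k) with h | h
      · exact Or.inr h
      · exact Or.inl (hg (by omega))
    · rintro (rfl | hk) <;> omega
  have h3 : i ∉ univ.filter (fun j => g i < g j) := by simp
  rw [h2, Finset.card_insert_of_notMem h3] at h1
  rw [Finset.card_univ, Fintype.card_fin] at h1
  unfold rnk; omega

theorem sub_rnk_lt (hnp : n < p) {g : Fin n → ℕ} (hg : Function.Injective g)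
    (hgb : ∀ k, g k ≤ p - 2) (i : Fin n) : g i - rnk g i < p - n := by
  have h1 := rnk_card_split hg i
  have h2 : (univ.filter (fun j => g i < g j)).card ≤ (p - 1) - (g i + 1) := by
    have hsub : univ.filter (fun j => g i < g j) ⊆
        univ.filter (fun k => g i + 1 ≤ g k ∧ g k < p - 1) := by
      intro k hk
      simp only [mem_filter, mem_univ, true_and] at hk ⊢
      have := hgb k
      have := hgb i
      have := i.pos
      omega
    exact le_trans (Finset.card_le_card hsub) (count_le hg (g i + 1) (p - 1))
  have h3 := rnk_le hg i
  have h4 := hgb i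
  have := i.pos
  omega

theorem key_lex (hnp : n < p) {g : Fin n → ℕ} (hg : Function.Injective g)
    (hadj : ∀ a b : Fin n, g a + 1 = g b → a < b) {i j : Fin n} (h : g j < g i) :
    g j - rnk g j < g i - rnk g i ∨ (g j - rnk g j = g i - rnk g i ∧ j < i) := by
  have hAsub : univ.filter (fun k => g k < g j) ⊆ univ.filter (fun k => g k < g i) := by
    intro k hk; simp only [mem_filter, mem_univ, true_and] at hk ⊢; omega
  have hD : univ.filter (fun k => g k < g i) \ univ.filter (fun k => g k < g j)
      = univ.filter (fun k => g j ≤ g k ∧ g k < g i) := by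
    ext k
    simp only [Finset.mem_sdiff, mem_filter, mem_univ, true_and]
    omega
  have hcard : rnk g i = rnk g j +
      (univ.filter (fun k => g j ≤ g k ∧ g k < g i)).card := by
    unfold rnk
    rw [← hD, Finset.card_sdiff_of_subset hAsub]
    have := Finset.card_le_card hAsub
    omega
  have hDle := count_le hg (g j) (g i)
  have hrj := rnk_le hg j
  have hri := rnk_le hg i
  rcases Nat.lt_or_ge (univ.filter (fun k => g j ≤ g k ∧ g k < g i)).card (g i - g j) with hlt | hge
  · left; omega
  · right
    have hDeq : (univ.filter (fun k => g j ≤ g k ∧ g k < g i)).card = g i - g j := le_antisymm hDle hge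
    refine ⟨by omega, ?_⟩
    have hrun : ∀ c, g j ≤ c → c < g i → ∃ k, g k = c :=
      fun c hc1 hc2 => all_attained hg (g j) (g i) hDeq hc1 hc2
    exact chain hadj (g i - g j - 1) j i (by omega) hrun


theorem surj (hnp : n < p) (v : Fin n → ZMod p) (e : ZMod p)
    (hv1 : ∀ i j : Fin n, i < j → v i ≠ v j)
    (hv2 : ∀ i j : Fin n, i < j → v i - v j ≠ 0 ∧ v i - v j ≠ 1)
    (he : e ∉ Set.range v) :
    ∃ f : Fin n → Fin (p - n), fwd e f = v := by
  have hp0 : 0 < p := lt_of_le_of_lt (Nat.zero_le n) hnp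
  haveI : NeZero p := ⟨hp0.ne'⟩
  have vinj : Function.Injective v := by
    intro i j h
    by_contra hij
    rcases lt_or_gt_of_ne hij with h1 | h1
    · exact hv1 i j h1 h
    · exact hv1 j i h1 h.symm
  -- positions
  set g : Fin n → ℕ := fun i => (v i - e).val - 1 with hgdef
  have hq1 : ∀ i, 1 ≤ (v i - e).val := by
    intro i
    have hne : v i - e ≠ 0 := by
      intro h
      exact he ⟨i, by rw [← sub_eq_zero]; exact h⟩
    have : (v i - e).val ≠ 0 := fun h => hne ((ZMod.val_eq_zero _).1 h)
    omega
  have hq2 : ∀ i, (v i - e).val ≤ p - 1 := fun i => by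
    have := ZMod.val_lt (v i - e); omega
  have hcastg : ∀ i, ((g i + 1 : ℕ) : ZMod p) = v i - e := by
    intro i
    have h1 : g i + 1 = (v i - e).val := by
      have := hq1 i; simp only [hgdef]; omega
    rw [h1, ZMod.natCast_val, ZMod.cast_id]
  have hginj : Function.Injective g := by
    intro i j h
    apply vinj
    have h2 : v i - e = v j - e := by
      rw [← hcastg i, ← hcastg j, h]
    linear_combination h2
  have hgb : ∀ k, g k ≤ p - 2 := by
    intro k
    have := hq1 k; have := hq2 k
    simp only [hgdef]; omega
  have hadj : ∀ a b : Fin n, g a + 1 = g b → a < b := by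
    intro a b h
    have hsub : v b - v a = 1 := by
      have h1 : ((g b + 1 : ℕ) : ZMod p) = ((g a + 1 : ℕ) : ZMod p) + 1 := by
        rw [← h]; push_cast; ring
      rw [hcastg a, hcastg b] at h1
      linear_combination h1
    by_contra hab
    have hne : a ≠ b := fun hh => by rw [hh] at h; omega
    have h2 : b < a := by
      rcases lt_or_gt_of_ne hne with h3 | h3
      · exact absurd h3 hab
      · exact h3
    exact (hv2 b a h2).2 hsub
  refine ⟨fun i => ⟨g i - rnk g i, sub_rnk_lt hnp hginj hgb i⟩, ?_⟩
  set f : Fin n → Fin (p - n) := fun i => ⟨g i - rnk g i, sub_rnk_lt hnp hginj hgb i⟩ with hfdef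
  have hklt : ∀ i j : Fin n, klt f j i ↔ g j < g i := by
    intro i j
    constructor
    · intro hk
      have hji : j ≠ i := by
        intro hh; rw [hh] at hk; exact klt_irrefl f i hk
      rcases Nat.lt_or_ge (g j) (g i) with h1 | h1
      · exact h1
      · have h2 : g i < g j := by
          rcases Nat.lt_or_ge (g i) (g j) with h3 | h3
          · exact h3
          · exact absurd (hginj (by omega)) (Ne.symm hji)
        have h3 := key_lex hnp hginj hadj h2
        -- h3 : klt-style for (i, j); contradicts hk
        rcases hk with hk | ⟨hk, hk'⟩ <;> rcases h3 with h3 | ⟨h3, h3'⟩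
        · have h4 : (f j : ℕ) = g j - rnk g j := rfl
          have h5 : (f i : ℕ) = g i - rnk g i := rfl
          have h6 : (f j : ℕ) < (f i : ℕ) := hk
          omega
        · have h6 : (f j : ℕ) < (f i : ℕ) := hk
          have h4 : (f j : ℕ) = g j - rnk g j := rfl
          have h5 : (f i : ℕ) = g i - rnk g i := rfl
          omega
        · have h6 : (f j : ℕ) = (f i : ℕ) := by rw [hk]
          have h4 : (f j : ℕ) = g j - rnk g j := rfl
          have h5 : (f i : ℕ) = g i - rnk g i := rfl
          omega
        · exact absurd (hk'.trans h3') (lt_irrefl j)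
    · intro h1
      have h3 := key_lex hnp hginj hadj h1
      rcases h3 with h3 | ⟨h3, h3'⟩
      · exact Or.inl h3
      · exact Or.inr ⟨Fin.ext h3, h3'⟩
  have hrk : ∀ i, rk f i = rnk g i := by
    intro i
    unfold rk rnk
    congr 1
    apply Finset.filter_congr
    intro j _
    simp only [hklt i j, eq_iff_iff]
  have hposf : ∀ i, posf f i = g i := by
    intro i
    have h1 := rnk_le hginj i
    have h2 : (f i : ℕ) = g i - rnk g i := rfl
    unfold posf
    rw [hrk i]
    omega
  funext i
  show e + ((posf f i + 1 : ℕ) : ZMod p) = v i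
  rw [hposf i, hcastg i]
  ring

end ShiAux

theorem shi_count (n p : ℕ) (hp : p.Prime) (hn : 2 ≤ n) (hnp : n < p) :
    Nat.card {v : Fin n → ZMod p //
      (∀ i j : Fin n, i < j → v i ≠ v j) ∧
      (∀ i j : Fin n, i < j → v i - v j ≠ 0 ∧ v i - v j ≠ 1)} = p * (p - n) ^ (n - 1) := by
  classical
  haveI : NeZero p := ⟨hp.pos.ne'⟩
  let A := {v : Fin n → ZMod p //
      (∀ i j : Fin n, i < j → v i ≠ v j) ∧
      (∀ i j : Fin n, i < j → v i - v j ≠ 0 ∧ v i - v j ≠ 1)}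
  let T := {x : (Fin n → ZMod p) × ZMod p //
      ((∀ i j : Fin n, i < j → x.1 i ≠ x.1 j) ∧
       (∀ i j : Fin n, i < j → x.1 i - x.1 j ≠ 0 ∧ x.1 i - x.1 j ≠ 1)) ∧
      x.2 ∉ Set.range x.1}
  -- Φ : (e, f) ↦ ((fwd e f, e), proofs)
  let Φ : ZMod p × (Fin n → Fin (p - n)) → T := fun ef =>
    ⟨(ShiAux.fwd ef.1 ef.2, ef.1),
      ⟨ShiAux.fwd_valid hnp ef.1 ef.2,
        by rintro ⟨i, hi⟩; exact ShiAux.fwd_ne hnp ef.1 ef.2 i hi⟩⟩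
  have hΦ : Function.Bijective Φ := by
    constructor
    · rintro ⟨e, f⟩ ⟨e', f'⟩ h
      have h1 : (ShiAux.fwd e f, e) = (ShiAux.fwd e' f', e') := congrArg Subtype.val h
      have he : e = e' := congrArg Prod.snd h1
      have hf : f = f' := ShiAux.fwd_inj hnp he (congrArg Prod.fst h1)
      rw [he, hf]
    · rintro ⟨⟨v, e⟩, ⟨hv1, hv2⟩, he⟩
      obtain ⟨f, hf⟩ := ShiAux.surj hnp v e hv1 hv2 he
      exact ⟨(e, f), Subtype.ext (Prod.ext hf rfl)⟩
  have hT1 : Nat.card T = p * (p - n) ^ n := by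
    rw [← Nat.card_congr (Equiv.ofBijective Φ hΦ), Nat.card_prod, Nat.card_zmod]
    congr 1
    simp [Nat.card_eq_fintype_card]
  -- T ≃ sigma
  let E : T ≃ Σ v : A, {e : ZMod p // e ∉ Set.range v.1} :=
    { toFun := fun x => ⟨⟨x.1.1, x.2.1⟩, ⟨x.1.2, x.2.2⟩⟩
      invFun := fun y => ⟨(y.1.1, y.2.1), ⟨y.1.2, y.2.2⟩⟩
      left_inv := fun x => rfl
      right_inv := fun y => rfl }
  haveI : Fintype A := Fintype.ofFinite A
  have hT2 : Nat.card T = Nat.card A * (p - n) := by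
    rw [Nat.card_congr E]
    have hfix : ∀ v : A, Nat.card {e : ZMod p // e ∉ Set.range v.1} = p - n := by
      intro v
      have vinj : Function.Injective v.1 := by
        intro i j h
        by_contra hij
        rcases lt_or_gt_of_ne hij with h1 | h1
        · exact v.2.1 i j h1 h
        · exact v.2.1 j i h1 h.symm
      have h0 : Nat.card {e : ZMod p // e ∉ Set.range v.1} = ((Set.range v.1)ᶜ).ncard :=
        Nat.card_coe_set_eq _
      have h1 := Set.ncard_add_ncard_compl (Set.range v.1)
      have h2 : (Set.range v.1).ncard = n := by
        rw [← Nat.card_coe_set_eq, Nat.card_range_of_injective vinj,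
          Nat.card_eq_fintype_card, Fintype.card_fin]
      rw [Nat.card_zmod] at h1
      omega
    haveI : ∀ v : A, Fintype {e : ZMod p // e ∉ Set.range v.1} := fun v =>
      Fintype.ofFinite _
    rw [Nat.card_eq_fintype_card, Fintype.card_sigma]
    rw [Nat.card_eq_fintype_card]
    calc (∑ v : A, Fintype.card {e : ZMod p // e ∉ Set.range v.1})
        = ∑ _v : A, (p - n) := by
          apply Finset.sum_congr rfl
          intro v _
          rw [← Nat.card_eq_fintype_card, hfix v]
      _ = Fintype.card A * (p - n) := by
          rw [Finset.sum_const, Finset.card_univ, smul_eq_mul]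
  have hpn : 0 < p - n := by omega
  apply Nat.eq_of_mul_eq_mul_right hpn
  show Nat.card A * (p - n) = p * (p - n) ^ (n - 1) * (p - n)
  rw [← hT2, hT1, mul_assoc, ← pow_succ]
  congr 2
  omega
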